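/- Let f(z) = λ·e^z with λ ∈ ℂ \ {0} be a hyperbolic exponential function (having an attracting periodic cycle), and suppose the forward orbit of 0 stays at positive distance from the Julia set J_f. Then a point z ∈ J_f is radial (there exists δ > 0 such that for infinitely many n, f^n admits an analytic inverse branch on B(f^n(z), δ) sending f^n(z) to z) if and only if the sequence (f^n(z))_{n≥1} does not converge to ∞. -/

import Mathlib

open Filter

/-- The chordal (spherical) distance between two points of `ℂ ⊆ Ĉ`. -/
noncomputable def chordalDist (z w : ℂ) : ℝ :=
  2 * ‖z - w‖ /
    (Real.sqrt (1 + ‖z‖ ^ 2) * Real.sqrt (1 + ‖w‖ ^ 2))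

/-- `z` is a radial point for `f`: there is `δ > 0` such that for infinitely many `n`, the
iterate `fⁿ` admits an analytic inverse branch on the spherical ball `B_sph(fⁿ(z), δ)`
sending `fⁿ(z)` back to `z`. -/
def IsRadialPoint (f : ℂ → ℂ) (z : ℂ) : Prop :=
  ∃ δ > (0 : ℝ), ∀ N : ℕ, ∃ n ≥ N, ∃ g : ℂ → ℂ,
    AnalyticOnNhd ℂ g {w | chordalDist (f^[n] z) w < δ} ∧
    g (f^[n] z) = z ∧
    ∀ w, chordalDist (f^[n] z) w < δ → f^[n] (g w) = w



section RadialAux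
open Complex Metric Topology

lemma one_le_sqrt_one_add_sq (x : ℝ) : 1 ≤ Real.sqrt (1 + x ^ 2) := by
  have := Real.sqrt_le_sqrt (show (1:ℝ) ≤ 1 + x ^ 2 by nlinarith [sq_nonneg x])
  simpa using this

lemma sqrt_one_add_sq_pos (x : ℝ) : 0 < Real.sqrt (1 + x ^ 2) :=
  lt_of_lt_of_le one_pos (one_le_sqrt_one_add_sq x)

lemma self_le_sqrt_one_add_sq {x : ℝ} (hx : 0 ≤ x) : x ≤ Real.sqrt (1 + x ^ 2) := by
  have := Real.sqrt_le_sqrt (show x ^ 2 ≤ 1 + x ^ 2 by nlinarith)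
  rwa [Real.sqrt_sq hx] at this

lemma sqrt_one_add_sq_le {x : ℝ} (hx : 0 ≤ x) : Real.sqrt (1 + x ^ 2) ≤ 1 + x := by
  have h := Real.sqrt_le_sqrt (show (1:ℝ) + x ^ 2 ≤ (1 + x) ^ 2 by nlinarith)
  rwa [Real.sqrt_sq (by linarith)] at h

lemma chordalDist_nonneg (z w : ℂ) : 0 ≤ chordalDist z w := by
  unfold chordalDist
  positivity

lemma chordalDist_le_two_mul (z w : ℂ) : chordalDist z w ≤ 2 * ‖(z - w)‖ := by
  unfold chordalDist
  rw [div_le_iff₀ (by positivity)]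
  have h1 := one_le_sqrt_one_add_sq (‖z‖)
  have h2 := one_le_sqrt_one_add_sq (‖w‖)
  have hs : (1:ℝ) * 1 ≤ Real.sqrt (1 + ‖z‖ ^ 2) * Real.sqrt (1 + ‖w‖ ^ 2) :=
    mul_le_mul h1 h2 zero_le_one (le_trans zero_le_one h1)
  nlinarith [norm_nonneg (z - w)]

lemma abs_sub_lt_of_chordal {a w : ℂ} {M δ : ℝ} (hM : ‖a‖ ≤ M)
    (hδ1 : δ * Real.sqrt (1 + M ^ 2) ≤ 1) (h : chordalDist a w < δ) :
    ‖(a - w)‖ < δ * Real.sqrt (1 + M ^ 2) * (1 + M) := by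
  have hM0 : 0 ≤ M := le_trans (norm_nonneg _) hM
  have hδ0 : 0 < δ := lt_of_le_of_lt (chordalDist_nonneg a w) h
  set d := ‖(a - w)‖ with hd
  have hd0 : 0 ≤ d := norm_nonneg _
  have h2 : 2 * d < δ * (Real.sqrt (1 + ‖a‖ ^ 2) * Real.sqrt (1 + ‖w‖ ^ 2)) := by
    have := (div_lt_iff₀ (by positivity : (0:ℝ) <
      Real.sqrt (1 + ‖a‖ ^ 2) * Real.sqrt (1 + ‖w‖ ^ 2))).1 h
    linarith
  have hsa : Real.sqrt (1 + ‖a‖ ^ 2) ≤ Real.sqrt (1 + M ^ 2) := by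
    apply Real.sqrt_le_sqrt
    nlinarith [norm_nonneg a]
  have hsw : Real.sqrt (1 + ‖w‖ ^ 2) ≤ 1 + ‖w‖ :=
    sqrt_one_add_sq_le (norm_nonneg _)
  have hwb : ‖w‖ ≤ M + d := by
    have h' : ‖w‖ - ‖a‖ ≤ ‖(w - a)‖ := by
      simpa using norm_sub_norm_le (w : ℂ) a
    have h'' : ‖(w - a)‖ = d := by rw [hd, norm_sub_rev]
    linarith
  have step1 : δ * (Real.sqrt (1 + ‖a‖ ^ 2) * Real.sqrt (1 + ‖w‖ ^ 2))
      ≤ δ * (Real.sqrt (1 + M ^ 2) * (1 + ‖w‖)) := by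
    apply mul_le_mul_of_nonneg_left _ hδ0.le
    exact mul_le_mul hsa hsw (by positivity) (Real.sqrt_nonneg _)
  have step2 : δ * (Real.sqrt (1 + M ^ 2) * (1 + ‖w‖))
      ≤ δ * Real.sqrt (1 + M ^ 2) * (1 + M + d) := by
    rw [mul_assoc]
    apply mul_le_mul_of_nonneg_left _ hδ0.le
    apply mul_le_mul_of_nonneg_left _ (Real.sqrt_nonneg _)
    linarith
  have hAd : δ * Real.sqrt (1 + M ^ 2) * d ≤ d := mul_le_of_le_one_left hd0 hδ1
  nlinarith
lemma chordal_lt_of_big {a w : ℂ} {δ : ℝ} (ha : 1 ≤ ‖a‖)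
    (hδ : 4 < δ * ‖a‖) (hw : ‖a‖ ≤ ‖w‖) :
    chordalDist a w < δ := by
  have ha0 : 0 < ‖a‖ := lt_of_lt_of_le one_pos ha
  have hw0 : 0 < ‖w‖ := lt_of_lt_of_le ha0 hw
  have hδ0 : 0 < δ := by nlinarith
  have h1 : ‖a‖ ≤ Real.sqrt (1 + ‖a‖ ^ 2) :=
    self_le_sqrt_one_add_sq ha0.le
  have h2 : ‖w‖ ≤ Real.sqrt (1 + ‖w‖ ^ 2) :=
    self_le_sqrt_one_add_sq hw0.le
  unfold chordalDist
  rw [div_lt_iff₀ (by positivity)]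
  have h3 : ‖(a - w)‖ ≤ ‖a‖ + ‖w‖ :=
    norm_sub_le a w
  have h4 : 2 * ‖(a - w)‖ ≤ 4 * ‖w‖ := by nlinarith
  have h5 : ‖a‖ * ‖w‖ ≤
      Real.sqrt (1 + ‖a‖ ^ 2) * Real.sqrt (1 + ‖w‖ ^ 2) :=
    mul_le_mul h1 h2 (le_of_lt hw0) (Real.sqrt_nonneg _)
  nlinarith [sqrt_one_add_sq_pos (‖a‖), sqrt_one_add_sq_pos (‖w‖)]

lemma exists_primitive {c : ℂ} {R ρ : ℝ} (hρ : 0 < ρ) (hρR : ρ < R) {h : ℂ → ℂ}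
    (hh : DifferentiableOn ℂ h (ball c R)) :
    ∃ F : ℂ → ℂ, ∀ w ∈ ball c ρ, HasDerivAt F (h w) w := by
  set ρ' : ℝ := (ρ + R) / 2 with hρ'def
  have hρρ' : ρ < ρ' := by simp [hρ'def]; linarith
  have hρ'R : ρ' < R := by simp [hρ'def]; linarith
  have hρ'pos : 0 < ρ' := lt_trans hρ hρρ'
  set R' : NNReal := ρ'.toNNReal with hR'def
  have hR'pos : 0 < R' := by simp [hR'def]; exact hρ'pos
  have hsub : closedBall c (R' : ℝ) ⊆ ball c R := by
    apply closedBall_subset_ball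
    simpa [hR'def, Real.coe_toNNReal _ hρ'pos.le] using hρ'R
  have hp := (hh.mono hsub).hasFPowerSeriesOnBall hR'pos
  set p := cauchyPowerSeries h c R' with hpdef
  have hrad : (ρ.toNNReal : ENNReal) < p.radius := by
    refine lt_of_lt_of_le ?_ hp.r_le
    rw [ENNReal.coe_lt_coe]
    simp only [← NNReal.coe_lt_coe, Real.coe_toNNReal _ hρ.le, hR'def,
      Real.coe_toNNReal _ hρ'pos.le]
    exact hρρ'
  have hu : Summable (fun n => ‖p n‖ * ρ ^ n) := by
    have := p.summable_norm_mul_pow hrad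
    simpa [Real.coe_toNNReal _ hρ.le] using this
  refine ⟨fun w => ∑' n, (p.coeff n / (n + 1)) * (w - c) ^ (n + 1), fun w hw => ?_⟩
  have key := hasDerivAt_tsum_of_isPreconnected hu isOpen_ball
    (convex_ball c ρ).isPreconnected
    (g := fun n w => (p.coeff n / (n + 1)) * (w - c) ^ (n + 1))
    (g' := fun n w => p.coeff n * (w - c) ^ n)
    (u := fun n => ‖p n‖ * ρ ^ n)
    (fun n y _ => ?_) (fun n y hy => ?_) (mem_ball_self hρ) ?_ hw
  · -- identify the sum of derivatives with h w
    have hmem : w - c ∈ Metric.eball (0 : ℂ) (R' : ENNReal) := by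
      rw [Metric.mem_eball, edist_zero_right, enorm_eq_nnnorm, ENNReal.coe_lt_coe,
        ← NNReal.coe_lt_coe, coe_nnnorm, hR'def, Real.coe_toNNReal _ hρ'pos.le]
      have := mem_ball_iff_norm.1 hw
      linarith
    have hs := hp.hasSum hmem
    simp only [add_sub_cancel] at hs
    have : (fun n => (p n) fun _ => w - c) = fun n => p.coeff n * (w - c) ^ n := by
      funext n
      rw [FormalMultilinearSeries.apply_eq_pow_smul_coeff, smul_eq_mul, mul_comm]
    rw [this] at hs
    rwa [hs.tsum_eq] at key
  · -- HasDerivAt of each term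
    have h1 : HasDerivAt (fun w : ℂ => (w - c) ^ (n + 1))
        ((n + 1 : ℕ) * (y - c) ^ n) y := by
      simpa using ((hasDerivAt_id y).sub_const c).fun_pow (n + 1)
    have h2 := h1.const_mul (p.coeff n / (n + 1))
    have h3 : p.coeff n / ((n : ℂ) + 1) * (((n : ℕ) + 1 : ℂ) * (y - c) ^ n)
        = p.coeff n * (y - c) ^ n := by
      have hne : ((n : ℂ) + 1) ≠ 0 := Nat.cast_add_one_ne_zero n
      push_cast
      field_simp
    have goal : HasDerivAt (fun w => p.coeff n / ((n : ℂ) + 1) * (w - c) ^ (n + 1))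
        (p.coeff n * (y - c) ^ n) y := by
      rw [← h3]
      refine h2.congr_deriv ?_
      simp
    exact goal
  · -- bound
    have hyc : ‖y - c‖ ≤ ρ := (mem_ball_iff_norm.1 hy).le
    calc ‖p.coeff n * (y - c) ^ n‖ = ‖p.coeff n‖ * ‖y - c‖ ^ n := by
          rw [norm_mul, norm_pow]
      _ ≤ ‖p n‖ * ρ ^ n := by
          rw [p.norm_apply_eq_norm_coef]
          exact mul_le_mul le_rfl (pow_le_pow_left₀ (norm_nonneg _) hyc n)
            (pow_nonneg (norm_nonneg _) n) (norm_nonneg _)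
  · -- summable at center
    convert summable_zero with n
    simp

lemma exists_log {c : ℂ} {R ρ : ℝ} (hρ : 0 < ρ) (hρR : ρ < R) {φ : ℂ → ℂ}
    (hφ : DifferentiableOn ℂ φ (ball c R)) (hne : ∀ w ∈ ball c R, φ w ≠ 0) :
    ∃ F : ℂ → ℂ, (∀ w ∈ ball c ρ, DifferentiableAt ℂ F w) ∧
      ∀ w ∈ ball c ρ, Complex.exp (F w) = φ w := by
  have hRpos : 0 < R := lt_trans hρ hρR
  have hball : IsOpen (ball c R) := isOpen_ball
  have han : AnalyticOnNhd ℂ φ (ball c R) := hφ.analyticOnNhd hball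
  have hderiv : DifferentiableOn ℂ (fun w => deriv φ w / φ w) (ball c R) := by
    apply DifferentiableOn.div
    · exact (han.deriv).differentiableOn
    · exact hφ
    · exact hne
  obtain ⟨F₀, hF₀⟩ := exists_primitive hρ hρR hderiv
  -- ψ = φ * exp (-F₀) is locally constant on ball c ρ
  have hψ : ∀ w ∈ ball c ρ, HasDerivAt (fun x => φ x * Complex.exp (-F₀ x)) 0 w := by
    intro w hw
    have hwR : w ∈ ball c R := ball_subset_ball hρR.le hw
    have hφw : HasDerivAt φ (deriv φ w) w :=
      ((hφ.differentiableAt (hball.mem_nhds hwR))).hasDerivAt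
    have hF : HasDerivAt F₀ (deriv φ w / φ w) w := hF₀ w hw
    have hexp : HasDerivAt (fun x => Complex.exp (-F₀ x))
        (-(deriv φ w / φ w) * Complex.exp (-F₀ w)) w := by
      have := (hF.neg).cexp
      simpa [mul_comm] using this
    have := hφw.mul hexp
    refine this.congr_deriv ?_
    have hφne : φ w ≠ 0 := hne w hwR
    have hφd : φ w * (deriv φ w / φ w) = deriv φ w := mul_div_cancel₀ _ hφne
    linear_combination (-(Complex.exp (-F₀ w))) * hφd
  have hconst : ∀ w ∈ ball c ρ, φ w * Complex.exp (-F₀ w) = φ c * Complex.exp (-F₀ c) := by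
    intro w hw
    have := Convex.norm_image_sub_le_of_norm_hasDerivWithin_le
      (f := fun x => φ x * Complex.exp (-F₀ x)) (f' := fun _ => 0) (C := 0)
      (fun x hx => (hψ x hx).hasDerivWithinAt) (fun x _ => by simp)
      (convex_ball c ρ) (mem_ball_self hρ) hw
    have h0 : ‖(φ w * Complex.exp (-F₀ w) - φ c * Complex.exp (-F₀ c))‖ ≤ 0 := by
      simpa using this
    have := le_antisymm h0 (norm_nonneg _)
    rwa [norm_eq_zero, sub_eq_zero] at this
  have hcne : φ c * Complex.exp (-F₀ c) ≠ 0 :=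
    mul_ne_zero (hne c (mem_ball_self hRpos)) (Complex.exp_ne_zero _)
  obtain ⟨γ, hγ⟩ : ∃ γ : ℂ, Complex.exp γ = φ c * Complex.exp (-F₀ c) := by
    have : (φ c * Complex.exp (-F₀ c)) ∈ Set.range Complex.exp := by
      rw [Complex.range_exp]; exact hcne
    exact this
  refine ⟨fun w => F₀ w + γ, fun w hw => ?_, fun w hw => ?_⟩
  · exact ((hF₀ w hw).differentiableAt).add_const γ
  · have h1 := hconst w hw
    have : Complex.exp (F₀ w + γ) = Complex.exp (F₀ w) * (φ w * Complex.exp (-F₀ w)) := by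
      rw [h1, ← hγ, Complex.exp_add]
    rw [this, mul_comm (Complex.exp (F₀ w)), mul_assoc, ← Complex.exp_add]
    simp

lemma branch_aux (lam : ℂ) (hlam : lam ≠ 0) (f : ℂ → ℂ)
    (hf : f = fun w => lam * Complex.exp w) (z : ℂ) (n : ℕ) {r : ℝ} (hr : 0 < r)
    (horb : ∀ j : ℕ, j ≤ n → f^[j] 0 ∉ Metric.ball (f^[n] z) r) :
    ∀ j : ℕ, j ≤ n → ∃ φ : ℂ → ℂ,
      DifferentiableOn ℂ φ (Metric.ball (f^[n] z) (r / 2 + r / 2 ^ (j + 1))) ∧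
      φ (f^[n] z) = f^[n - j] z ∧
      ∀ w ∈ Metric.ball (f^[n] z) (r / 2 + r / 2 ^ (j + 1)), f^[j] (φ w) = w := by
  set a := f^[n] z with ha
  intro j
  induction j with
  | zero =>
    intro _
    refine ⟨id, differentiableOn_id, by simp [ha], fun w _ => by simp⟩
  | succ j ih =>
    intro hj
    have hj' : j ≤ n := Nat.le_of_succ_le hj
    obtain ⟨φ, hφd, hφa, hφinv⟩ := ih hj'
    set ρj : ℝ := r / 2 + r / 2 ^ (j + 1) with hρj
    set ρj1 : ℝ := r / 2 + r / 2 ^ (j + 2) with hρj1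
    have hρj1pos : 0 < ρj1 := by positivity
    have hρlt : ρj1 < ρj := by
      rw [hρj, hρj1]
      have : r / 2 ^ (j + 2) < r / 2 ^ (j + 1) := by
        apply div_lt_div_of_pos_left hr (by positivity)
        exact pow_lt_pow_right₀ (by norm_num) (by omega)
      linarith
    have hρjr : ρj ≤ r := by
      rw [hρj]
      have : r / 2 ^ (j + 1) ≤ r / 2 := by
        apply div_le_div_of_nonneg_left hr.le (by norm_num)
        calc (2:ℝ) = 2 ^ 1 := by norm_num
          _ ≤ 2 ^ (j + 1) := by
              apply pow_le_pow_right₀ one_le_two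
              omega
      linarith
    have hamem : a ∈ Metric.ball a ρj := mem_ball_self (by positivity)
    have hne : ∀ w ∈ Metric.ball a ρj, φ w / lam ≠ 0 := by
      intro w hw
      apply div_ne_zero _ hlam
      intro h0
      have h1 : f^[j] (φ w) = w := hφinv w hw
      rw [h0] at h1
      exact horb j hj' (ball_subset_ball hρjr (h1 ▸ hw))
    obtain ⟨F, hFd, hFexp⟩ := exists_log hρj1pos hρlt
      (φ := fun w => φ w / lam) (hφd.div_const lam) hne
    set t := f^[n - (j + 1)] z with ht
    have hsucc : n - j = (n - (j + 1)) + 1 := by omega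
    have hft : f t = f^[n - j] z := by
      rw [hsucc, Function.iterate_succ_apply', ht]
    have hexpt : Complex.exp t = f^[n - j] z / lam := by
      rw [← hft, hf]
      field_simp
    have haρ : a ∈ Metric.ball a ρj1 := mem_ball_self hρj1pos
    have hFa : Complex.exp (F a) = Complex.exp t := by
      rw [hFexp a haρ, hexpt, hφa]
    obtain ⟨k, hk⟩ := Complex.exp_eq_exp_iff_exists_int.1 hFa
    refine ⟨fun w => F w - k * (2 * Real.pi * Complex.I), ?_, ?_, ?_⟩
    · intro w hw
      exact ((hFd w hw).sub_const _).differentiableWithinAt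
    · show F a - k * (2 * Real.pi * Complex.I) = t
      rw [hk]
      ring
    · intro w hw
      have hfφ : f (F w - k * (2 * Real.pi * Complex.I)) = φ w := by
        rw [hf]
        simp only
        rw [Complex.exp_sub, Complex.exp_int_mul_two_pi_mul_I, hFexp w hw]
        field_simp
      rw [Function.iterate_succ_apply, hfφ]
      exact hφinv w (ball_subset_ball hρlt.le hw)

set_option maxHeartbeats 1600000 in
lemma right_dir (lam : ℂ) (hlam : lam ≠ 0) (f : ℂ → ℂ)
    (hf : f = fun w => lam * Complex.exp w) (z : ℂ)
    (ht : Tendsto (fun n => ‖(f^[n] z)‖) atTop atTop) :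
    ¬ IsRadialPoint f z := by
  rintro ⟨δ, hδ, hbr⟩
  -- find a time n with large |fⁿ z| and an inverse branch there
  obtain ⟨N, hN⟩ := (tendsto_atTop_atTop.1 ht) (max 1 (5 / δ))
  obtain ⟨n, hn, g, hga, hgz, hginv⟩ := hbr (max N 1)
  set a := f^[n] z with ha
  set R := ‖a‖ with hR
  have hR1 : 1 ≤ R := le_trans (le_max_left _ _) (hN n (le_trans (le_max_left _ _) hn))
  have hR5 : 5 / δ ≤ R := le_trans (le_max_right _ _) (hN n (le_trans (le_max_left _ _) hn))
  have hR0 : (0:ℝ) < R := lt_of_lt_of_le one_pos hR1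
  have hR4 : 4 < δ * R := by
    have : 5 ≤ δ * R := by
      rw [div_le_iff₀ hδ] at hR5; linarith [hR5]
    linarith
  have hball : ∀ w : ℂ, R ≤ ‖w‖ → chordalDist a w < δ :=
    fun w hw => chordal_lt_of_big hR1 hR4 hw
  have hgan : ∀ w : ℂ, R ≤ ‖w‖ → AnalyticAt ℂ g w :=
    fun w hw => hga w (hball w hw)
  have hginv' : ∀ w : ℂ, R ≤ ‖w‖ → f^[n] (g w) = w :=
    fun w hw => hginv w (hball w hw)
  have hinj : ∀ w w' : ℂ, R ≤ ‖w‖ → R ≤ ‖w'‖ → g w = g w' → w = w' := by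
    intro w w' h1 h2 he
    rw [← hginv' w h1, ← hginv' w' h2, he]
  have hn1 : 1 ≤ n := le_trans (le_max_right _ _) hn
  have hfne : ∀ x : ℂ, f^[n] x ≠ 0 := by
    intro x
    obtain ⟨m, rfl⟩ : ∃ m, n = m + 1 := ⟨n - 1, by omega⟩
    rw [Function.iterate_succ_apply', hf]
    simp only
    exact mul_ne_zero hlam (Complex.exp_ne_zero _)
  have hFdiff : Differentiable ℂ (f^[n]) := by
    apply Differentiable.iterate
    rw [hf]
    exact (differentiable_const _).mul differentiable_exp
  set F := f^[n] with hFdef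
  -- open mapping at 2R
  set z₂ : ℂ := ((2 * R : ℝ) : ℂ) with hz₂
  have habs2 : ‖z₂‖ = 2 * R := by
    rw [hz₂, Complex.norm_real, Real.norm_eq_abs, abs_of_pos (by linarith)]
  have hg2 : AnalyticAt ℂ g z₂ := hgan z₂ (by rw [habs2]; linarith)
  rcases hg2.eventually_constant_or_nhds_le_map_nhds with hconst | hopen
  · -- constant near z₂ contradicts injectivity
    rw [Metric.eventually_nhds_iff] at hconst
    obtain ⟨ρ, hρ, hcon⟩ := hconst
    set w : ℂ := z₂ + ((min ρ R) / 2 : ℝ) with hw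
    have hmin : 0 < min ρ R := lt_min hρ hR0
    have hdist : dist w z₂ < ρ := by
      rw [hw, dist_self_add_left]
      calc ‖(((min ρ R) / 2 : ℝ) : ℂ)‖ = (min ρ R) / 2 := by
            rw [Complex.norm_real, Real.norm_of_nonneg (by linarith)]
        _ < ρ := by
            have := min_le_left ρ R; linarith
    have hwabs : R ≤ ‖w‖ := by
      rw [hw, hz₂, ← Complex.ofReal_add, Complex.norm_real, Real.norm_eq_abs,
        abs_of_pos (by linarith), ]
      linarith [min_le_right ρ R]
    have := hinj w z₂ hwabs (by rw [habs2]; linarith) (hcon hdist)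
    rw [hw] at this
    have : (((min ρ R) / 2 : ℝ) : ℂ) = 0 := by
      field_simp at this
      simpa using this
    rw [Complex.ofReal_eq_zero] at this
    linarith
  · -- open mapping: image of small ball is a neighborhood of c
    set c := g z₂ with hc
    have hV : g '' (ball z₂ (R / 2)) ∈ 𝓝 c := by
      apply hopen
      rw [mem_map]
      exact mem_of_superset (ball_mem_nhds z₂ (by linarith)) (Set.subset_preimage_image g _)
    obtain ⟨η, hη, hηV⟩ := Metric.mem_nhds_iff.1 hV
    have hfar : ∀ w : ℂ, 3 * R ≤ ‖w‖ → η ≤ ‖(g w - c)‖ := by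
      intro w hw3
      by_contra hlt
      push_neg at hlt
      have : g w ∈ ball c η := by
        rw [mem_ball, Complex.dist_eq]; exact hlt
      obtain ⟨w', hw'mem, hw'eq⟩ := hηV this
      have hw'dist : dist w' z₂ < R / 2 := mem_ball.1 hw'mem
      have hw'lb : R ≤ ‖w'‖ := by
        have h1 : ‖z₂‖ - ‖w'‖ ≤ ‖(w' - z₂)‖ := by
          rw [norm_sub_rev]
          simpa using norm_sub_norm_le z₂ w'
        rw [← Complex.dist_eq] at h1
        rw [habs2] at h1
        linarith
      have hw'ub : ‖w'‖ ≤ 2 * R + R / 2 := by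
        have h1 : ‖w'‖ - ‖z₂‖ ≤ ‖(w' - z₂)‖ := by
          simpa using norm_sub_norm_le w' z₂
        rw [← Complex.dist_eq, habs2] at h1
        linarith
      have := hinj w' w hw'lb (by linarith) hw'eq
      rw [← this] at hw3
      linarith
    -- pass to the variable ζ = 1/w near 0
    set s₁ : ℝ := (3 * R)⁻¹ with hs₁def
    have hs₁ : 0 < s₁ := by rw [hs₁def]; positivity
    set h : ℂ → ℂ := fun ζ => (g ζ⁻¹ - c)⁻¹ with hhdef
    have hkey : ∀ ζ : ℂ, ζ ≠ 0 → ‖ζ‖ < s₁ →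
        3 * R ≤ ‖(ζ : ℂ)⁻¹‖ ∧ η ≤ ‖(g ζ⁻¹ - c)‖ := by
      intro ζ hζ0 hζs
      have habsζ : 0 < ‖ζ‖ := by
        simpa [norm_pos_iff] using hζ0
      have h3 : 3 * R ≤ ‖(ζ : ℂ)⁻¹‖ := by
        rw [norm_inv, inv_eq_one_div, le_div_iff₀ habsζ]
        rw [hs₁def] at hζs
        have h3R : (0:ℝ) < 3 * R := by positivity
        have hmul : ‖ζ‖ * (3 * R) < 1 := by
          calc ‖ζ‖ * (3 * R) < (3 * R)⁻¹ * (3 * R) :=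
                mul_lt_mul_of_pos_right hζs h3R
            _ = 1 := inv_mul_cancel₀ (ne_of_gt h3R)
        linarith
      exact ⟨h3, hfar _ h3⟩
    have hdifh : DifferentiableOn ℂ h (ball (0:ℂ) s₁ \ {0}) := by
      rintro ζ ⟨hζb, hζ0⟩
      have hζ0' : ζ ≠ 0 := by simpa using hζ0
      have hζs : ‖ζ‖ < s₁ := by
        simpa [Complex.dist_eq] using mem_ball.1 hζb
      obtain ⟨h3, hηg⟩ := hkey ζ hζ0' hζs
      have hgd : DifferentiableAt ℂ (fun ζ : ℂ => g ζ⁻¹ - c) ζ := by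
        apply DifferentiableAt.sub_const
        exact ((hgan _ (by linarith)).differentiableAt).comp ζ (differentiableAt_inv hζ0')
      have hne0 : g ζ⁻¹ - c ≠ 0 := by
        intro h0
        rw [h0] at hηg
        simp at hηg
        linarith
      exact (hgd.inv hne0).differentiableWithinAt
    have hbdd : BddAbove (norm ∘ h '' (ball (0:ℂ) s₁ \ {0})) := by
      refine ⟨η⁻¹, ?_⟩
      rintro x ⟨ζ, ⟨hζb, hζ0⟩, rfl⟩
      have hζ0' : ζ ≠ 0 := by simpa using hζ0
      have hζs : ‖ζ‖ < s₁ := by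
        simpa [Complex.dist_eq] using mem_ball.1 hζb
      obtain ⟨h3, hηg⟩ := hkey ζ hζ0' hζs
      simp only [Function.comp_apply, hhdef, norm_inv]
      exact inv_anti₀ hη hηg
    have hsnhds : ball (0:ℂ) s₁ ∈ 𝓝 (0:ℂ) := ball_mem_nhds _ hs₁
    have hHd := Complex.differentiableOn_update_limUnder_of_bddAbove hsnhds hdifh hbdd
    set H := Function.update h 0 (limUnder (𝓝[≠] (0:ℂ)) h) with hHdef
    have hHan : AnalyticOnNhd ℂ H (ball 0 s₁) := hHd.analyticOnNhd isOpen_ball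
    have hHoff : ∀ ζ : ℂ, ζ ≠ 0 → H ζ = h ζ := fun ζ h0 => Function.update_of_ne h0 _ _
    by_cases hH0 : H 0 = 0
    · -- Case B : H 0 = 0, leads to linear growth of f^[n], Liouville contradiction
      set t₂ : ℝ := s₁ / 2 with ht₂def
      have ht₂ : 0 < t₂ := by rw [ht₂def]; positivity
      have hsub2 : closedBall (0:ℂ) t₂ ⊆ ball (0:ℂ) s₁ := by
        apply closedBall_subset_ball
        rw [ht₂def]; linarith
      have hderivH : ContinuousOn (deriv H) (closedBall (0:ℂ) t₂) :=
        ((hHan.deriv).continuousOn).mono hsub2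
      obtain ⟨C₂, hC₂⟩ := (isCompact_closedBall (0:ℂ) t₂).exists_bound_of_continuousOn hderivH
      have hC₂0 : 0 ≤ C₂ := le_trans (norm_nonneg _) (hC₂ 0 (mem_closedBall_self ht₂.le))
      have hLip : ∀ ζ ∈ closedBall (0:ℂ) t₂, ‖(H ζ)‖ ≤ C₂ * ‖ζ‖ := by
        intro ζ hζ
        have hmvt := Convex.norm_image_sub_le_of_norm_hasDerivWithin_le
          (f := H) (f' := deriv H) (C := C₂) (s := closedBall (0:ℂ) t₂)
          (fun x hx => ((hHd.differentiableAt
            (isOpen_ball.mem_nhds (hsub2 hx))).hasDerivAt).hasDerivWithinAt)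
          hC₂ (convex_closedBall _ _) (mem_closedBall_self ht₂.le) hζ
        simpa [hH0] using hmvt
      have hHat : AnalyticAt ℂ H 0 := hHan 0 (mem_ball_self hs₁)
      rcases hHat.eventually_constant_or_nhds_le_map_nhds with hcst | hopen2
      · -- H eventually 0 near 0 : impossible since H = h ≠ 0 off 0
        rw [Metric.eventually_nhds_iff] at hcst
        obtain ⟨ρ₂, hρ₂, hcon2⟩ := hcst
        set ζ₀ : ℂ := (((min ρ₂ t₂) / 2 : ℝ) : ℂ) with hζ₀def
        have hmin2 : 0 < min ρ₂ t₂ := lt_min hρ₂ ht₂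
        have hζ₀0 : ζ₀ ≠ 0 := by
          rw [hζ₀def, Complex.ofReal_ne_zero]
          positivity
        have habsζ₀ : ‖ζ₀‖ = (min ρ₂ t₂) / 2 := by
          rw [hζ₀def, Complex.norm_real, Real.norm_eq_abs, abs_of_pos (by positivity)]
        have hζ₀s : ‖ζ₀‖ < s₁ := by
          rw [habsζ₀]
          have h1 : min ρ₂ t₂ ≤ t₂ := min_le_right _ _
          rw [ht₂def] at h1 ⊢
          linarith [hs₁]
        obtain ⟨h3, hηg⟩ := hkey ζ₀ hζ₀0 hζ₀s
        have heq0 : H ζ₀ = H 0 := by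
          apply hcon2
          rw [Complex.dist_eq, sub_zero, habsζ₀]
          linarith [min_le_left ρ₂ t₂]
        rw [hH0, hHoff ζ₀ hζ₀0] at heq0
        have hne : g ζ₀⁻¹ - c ≠ 0 := by
          intro h0
          rw [h0] at hηg
          simp only [norm_zero] at hηg
          linarith
        exact (inv_ne_zero hne) heq0
      · -- the image of H covers a neighborhood of 0 : linear growth of F near ∞
        rw [hH0] at hopen2
        have hS : H '' (ball (0:ℂ) t₂) ∈ 𝓝 (0:ℂ) := by
          apply hopen2
          rw [mem_map]
          exact mem_of_superset (ball_mem_nhds _ ht₂) (Set.subset_preimage_image H _)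
        obtain ⟨s₀, hs₀, hs₀S⟩ := Metric.mem_nhds_iff.1 hS
        set K₁ : ℝ := ‖c‖ + 1 / s₀ + 1 with hK₁def
        have hgrow : ∀ v : ℂ, K₁ ≤ ‖v‖ →
            ‖(F v)‖ ≤ C₂ * (‖v‖ + ‖c‖) := by
          intro v hv
          have hvc1 : 1 / s₀ + 1 ≤ ‖(v - c)‖ := by
            have h1 : ‖v‖ - ‖c‖ ≤ ‖(v - c)‖ := by
              simpa using norm_sub_norm_le v c
            rw [hK₁def] at hv
            linarith
          have hvcpos : 0 < ‖(v - c)‖ := by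
            have h0 : (0:ℝ) < 1 / s₀ + 1 := by positivity
            linarith
          have hvc : v - c ≠ 0 := by
            intro h0; rw [h0] at hvcpos; simp at hvcpos
          set ζ' : ℂ := (v - c)⁻¹ with hζ'def
          have hζ'0 : ζ' ≠ 0 := inv_ne_zero hvc
          have habsζ' : ‖ζ'‖ < s₀ := by
            rw [hζ'def, norm_inv, inv_eq_one_div, div_lt_iff₀ hvcpos]
            have hss : s₀ * (1 / s₀) = 1 := by field_simp
            have hmm : s₀ * (1 / s₀ + 1) ≤ s₀ * ‖(v - c)‖ :=
              mul_le_mul_of_nonneg_left hvc1 hs₀.le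
            nlinarith [hs₀]
          obtain ⟨ζ, hζmem, hζeq⟩ := hs₀S (by
            rw [mem_ball, Complex.dist_eq, sub_zero]; exact habsζ' :
            ζ' ∈ ball (0:ℂ) s₀)
          have hζ0 : ζ ≠ 0 := by
            intro h0; rw [h0, hH0] at hζeq; exact hζ'0 hζeq.symm
          have hζt₂ : ‖ζ‖ < t₂ := by
            simpa [Complex.dist_eq] using mem_ball.1 hζmem
          have hζs₁' : ‖ζ‖ < s₁ := by rw [ht₂def] at hζt₂; linarith
          obtain ⟨h3, hηg⟩ := hkey ζ hζ0 hζs₁'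
          have hne : g ζ⁻¹ - c ≠ 0 := by
            intro h0; rw [h0] at hηg; simp only [norm_zero] at hηg; linarith
          have hgval : g ζ⁻¹ = v := by
            have h1 : (g ζ⁻¹ - c)⁻¹ = ζ' := by rw [← hζeq, hHoff ζ hζ0]
            have h2 : g ζ⁻¹ - c = ζ'⁻¹ := by
              rw [← h1, inv_inv]
            rw [hζ'def, inv_inv] at h2
            linear_combination h2
          have hRζ : R ≤ ‖(ζ : ℂ)⁻¹‖ := by linarith
          have hFval : F v = ζ⁻¹ := by rw [← hgval]; exact hginv' _ hRζ
          have habsζpos : 0 < ‖ζ‖ := by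
            simpa [norm_pos_iff] using hζ0
          have habsζ'pos : 0 < ‖ζ'‖ := by
            simpa [norm_pos_iff] using hζ'0
          have hLipζ : ‖ζ'‖ ≤ C₂ * ‖ζ‖ := by
            rw [← hζeq]
            exact hLip ζ (by
              rw [mem_closedBall, Complex.dist_eq, sub_zero]; exact hζt₂.le)
          have hF : ‖(F v)‖ = (‖ζ‖)⁻¹ := by rw [hFval, norm_inv]
          have h5 : (‖ζ‖)⁻¹ ≤ C₂ / ‖ζ'‖ := by
            rw [inv_eq_one_div, div_le_div_iff₀ habsζpos habsζ'pos]
            linarith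
          have h6 : C₂ / ‖ζ'‖ = C₂ * ‖(v - c)‖ := by
            rw [hζ'def, norm_inv]
            field_simp
          have h7 : ‖(v - c)‖ ≤ ‖v‖ + ‖c‖ :=
            norm_sub_le v c
          rw [hF]
          calc (‖ζ‖)⁻¹ ≤ C₂ / ‖ζ'‖ := h5
            _ = C₂ * ‖(v - c)‖ := h6
            _ ≤ C₂ * (‖v‖ + ‖c‖) :=
                mul_le_mul_of_nonneg_left h7 hC₂0
        -- Liouville for the difference quotient
        have hFan : AnalyticOnNhd ℂ F Set.univ :=
          hFdiff.differentiableOn.analyticOnNhd isOpen_univ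
        set K₂ : ℝ := max K₁ 1 with hK₂def
        have hK₂0 : 0 < K₂ := lt_of_lt_of_le one_pos (le_max_right _ _)
        obtain ⟨C₃, hC₃⟩ := (isCompact_closedBall (0:ℂ) K₂).exists_bound_of_continuousOn
          ((hFan.deriv).continuousOn.mono (Set.subset_univ _))
        have hFLip : ∀ v ∈ closedBall (0:ℂ) K₂, ‖(F v - F 0)‖ ≤ C₃ * ‖v‖ := by
          intro v hv
          have hmvt := Convex.norm_image_sub_le_of_norm_hasDerivWithin_le
            (f := F) (f' := deriv F) (C := C₃) (s := closedBall (0:ℂ) K₂)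
            (fun x _ => ((hFdiff x).hasDerivAt).hasDerivWithinAt)
            hC₃ (convex_closedBall _ _) (mem_closedBall_self hK₂0.le) hv
          simpa using hmvt
        set B : ℝ := max (C₂ * (1 + ‖c‖) + ‖(F 0)‖) C₃ with hBdef
        have hEbd : ∀ v : ℂ, v ≠ 0 → ‖((F v - F 0) * v⁻¹)‖ ≤ B := by
          intro v hv0
          have habsv : 0 < ‖v‖ := by simpa [norm_pos_iff] using hv0
          rw [norm_mul, norm_inv]
          by_cases hcase : ‖v‖ ≤ K₂
          · have h1 := hFLip v (by rw [mem_closedBall, Complex.dist_eq, sub_zero]; exact hcase)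
            have h2 : ‖(F v - F 0)‖ * (‖v‖)⁻¹ ≤ C₃ := by
              rw [mul_inv_le_iff₀ habsv]
              linarith
            exact le_trans h2 (le_max_right _ _)
          · push_neg at hcase
            have h1 : K₁ ≤ ‖v‖ := le_trans (le_max_left _ _) hcase.le
            have h2 : 1 ≤ ‖v‖ := le_trans (le_max_right _ _) hcase.le
            have h3 := hgrow v h1
            have h4 : ‖(F v - F 0)‖ ≤
                C₂ * (‖v‖ + ‖c‖) + ‖(F 0)‖ := by
              have := norm_sub_le (F v) (F 0)
              linarith
            have h5 : C₂ * (‖v‖ + ‖c‖) + ‖(F 0)‖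
                ≤ (C₂ * (1 + ‖c‖) + ‖(F 0)‖) * ‖v‖ := by
              have h2' : (0:ℝ) ≤ ‖v‖ - 1 := by linarith
              nlinarith [mul_nonneg (mul_nonneg hC₂0 (norm_nonneg c)) h2',
                mul_nonneg (norm_nonneg (F 0)) h2']
            have h6 : ‖(F v - F 0)‖ * (‖v‖)⁻¹ ≤
                C₂ * (1 + ‖c‖) + ‖(F 0)‖ := by
              rw [mul_inv_le_iff₀ habsv]
              calc ‖(F v - F 0)‖
                  ≤ (C₂ * (1 + ‖c‖) + ‖(F 0)‖) * ‖v‖ :=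
                    le_trans h4 h5
                _ = _ := by ring
            exact le_trans h6 (le_max_left _ _)
        have hEdiff : DifferentiableOn ℂ (fun v => (F v - F 0) * v⁻¹) (Set.univ \ {0}) := by
          rintro v ⟨_, hv0⟩
          have hv0' : v ≠ 0 := by simpa using hv0
          exact (((hFdiff v).sub_const _).mul (differentiableAt_inv hv0')).differentiableWithinAt
        have hEbdd : BddAbove (norm ∘ (fun v => (F v - F 0) * v⁻¹) '' (Set.univ \ {0})) := by
          refine ⟨B, ?_⟩
          rintro x ⟨v, ⟨_, hv0⟩, rfl⟩
          have hv0' : v ≠ 0 := by simpa using hv0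
          simpa using hEbd v hv0'
        have hEd := Complex.differentiableOn_update_limUnder_of_bddAbove
          (Filter.univ_mem) hEdiff hEbdd
        set E := Function.update (fun v => (F v - F 0) * v⁻¹) 0
          (limUnder (𝓝[≠] (0:ℂ)) (fun v => (F v - F 0) * v⁻¹)) with hEdef
        have hEdiff' : Differentiable ℂ E := by
          rw [← differentiableOn_univ]
          exact hEd
        have hEbd' : ∀ v : ℂ, ‖E v‖ ≤ max B ‖E 0‖ := by
          intro v
          by_cases hv : v = 0
          · rw [hv]; exact le_max_right _ _
          · rw [hEdef, Function.update_of_ne hv]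
            exact le_trans (by simpa using hEbd v hv) (le_max_left _ _)
        have hbound : Bornology.IsBounded (Set.range E) := by
          rw [Metric.isBounded_iff_subset_closedBall 0]
          refine ⟨max B ‖E 0‖, ?_⟩
          rintro x ⟨v, rfl⟩
          rw [mem_closedBall, dist_zero_right]
          exact hEbd' v
        have hFv : ∀ v : ℂ, v ≠ 0 → F v = F 0 + E 0 * v := by
          intro v hv
          have h1 : E v = E 0 := hEdiff'.apply_eq_apply_of_bounded hbound v 0
          rw [hEdef, Function.update_of_ne hv] at h1
          have h2 : (F v - F 0) * v⁻¹ * v = E 0 * v := by rw [h1]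
          rw [mul_assoc, inv_mul_cancel₀ hv, mul_one] at h2
          linear_combination h2
        by_cases hE0 : E 0 = 0
        · -- F constant, contradiction
          have hcF : ∀ x : ℂ, F x = F 0 := by
            intro x
            by_cases hx : x = 0
            · rw [hx]
            · rw [hFv x hx, hE0]; ring
          have h4R : R ≤ ‖((4 * R : ℝ) : ℂ)‖ := by
            rw [Complex.norm_real, Real.norm_eq_abs, abs_of_pos (by linarith)]; linarith
          have h5R : R ≤ ‖((5 * R : ℝ) : ℂ)‖ := by
            rw [Complex.norm_real, Real.norm_eq_abs, abs_of_pos (by linarith)]; linarith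
          have e1 : F (g ((4 * R : ℝ) : ℂ)) = ((4 * R : ℝ) : ℂ) := hginv' _ h4R
          have e2 : F (g ((5 * R : ℝ) : ℂ)) = ((5 * R : ℝ) : ℂ) := hginv' _ h5R
          rw [hcF] at e1 e2
          have : ((4 * R : ℝ) : ℂ) = ((5 * R : ℝ) : ℂ) := by rw [← e1, ← e2]
          rw [Complex.ofReal_inj] at this
          linarith
        · -- F affine nonconstant attains 0, contradiction with F ≠ 0
          have hF00 : F 0 ≠ 0 := hfne 0
          set v := -F 0 / E 0 with hvdef
          have hvne : v ≠ 0 := div_ne_zero (neg_ne_zero.2 hF00) hE0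
          have : F v = 0 := by
            rw [hFv v hvne, hvdef]
            field_simp
            ring
          exact hfne v this

    · -- Case A : g is bounded near ∞, contradiction with f^[n] ∘ g = id
      have hcont : ContinuousAt H 0 := (hHan 0 (mem_ball_self hs₁)).continuousAt
      rw [Metric.continuousAt_iff] at hcont
      obtain ⟨t, ht, htc⟩ := hcont (‖(H 0)‖ / 2) (by
        simpa [norm_pos_iff] using hH0)
      set t' : ℝ := min t s₁ with ht'def
      have ht' : 0 < t' := lt_min ht hs₁
      have hgbd : ∀ w : ℂ, max (3 * R) t'⁻¹ < ‖w‖ →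
          ‖(g w)‖ ≤ ‖c‖ + 2 / ‖(H 0)‖ := by
        intro w hwbig
        have hw0 : w ≠ 0 := by
          intro h0
          rw [h0] at hwbig
          simp only [norm_zero] at hwbig
          have h1 : (0:ℝ) < 3 * R := by positivity
          have h2 := lt_of_le_of_lt (le_max_left (3*R) t'⁻¹) hwbig
          linarith
        set ζ := w⁻¹ with hζdef
        have hζ0 : ζ ≠ 0 := inv_ne_zero hw0
        have habsw : 0 < ‖w‖ := by simpa [norm_pos_iff] using hw0
        have hwt : t'⁻¹ < ‖w‖ := lt_of_le_of_lt (le_max_right (3*R) t'⁻¹) hwbig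
        have hζs : ‖ζ‖ < t' := by
          rw [hζdef, norm_inv, inv_eq_one_div, div_lt_iff₀ habsw]
          have h1 : (1:ℝ) = t' * t'⁻¹ := (mul_inv_cancel₀ (ne_of_gt ht')).symm
          have h2 : t' * t'⁻¹ < t' * ‖w‖ := mul_lt_mul_of_pos_left hwt ht'
          linarith
        have hζs₁ : ‖ζ‖ < s₁ := lt_of_lt_of_le hζs (min_le_right _ _)
        obtain ⟨h3, hηg⟩ := hkey ζ hζ0 hζs₁
        have hHζ : H ζ = (g w - c)⁻¹ := by
          rw [hHoff ζ hζ0, hhdef]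
          simp only
          rw [hζdef, inv_inv]
        have hdist : ‖(H ζ - H 0)‖ < ‖(H 0)‖ / 2 := by
          have := htc (show dist ζ 0 < t by
            rw [Complex.dist_eq, sub_zero]
            exact lt_of_lt_of_le hζs (min_le_left _ _))
          simpa [Complex.dist_eq] using this
        have hHζlb : ‖(H 0)‖ / 2 < ‖(H ζ)‖ := by
          have h1 : ‖(H 0)‖ - ‖(H ζ)‖ ≤ ‖(H 0 - H ζ)‖ := by
            simpa using norm_sub_norm_le (H 0) (H ζ)
          have h2 : ‖(H 0 - H ζ)‖ = ‖(H ζ - H 0)‖ := norm_sub_rev _ _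
          linarith
        have hH0pos : 0 < ‖(H 0)‖ := by simpa [norm_pos_iff] using hH0
        have hHζpos : 0 < ‖(H ζ)‖ := by linarith
        have hgwc : ‖(g w - c)‖ = (‖(H ζ)‖)⁻¹ := by
          rw [hHζ, norm_inv, inv_inv]
        have hgw : ‖(g w - c)‖ ≤ 2 / ‖(H 0)‖ := by
          rw [hgwc, inv_eq_one_div, div_le_div_iff₀ hHζpos hH0pos]
          linarith
        calc ‖(g w)‖ = ‖(c + (g w - c))‖ := by ring_nf
          _ ≤ ‖c‖ + ‖(g w - c)‖ := norm_add_le _ _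
          _ ≤ ‖c‖ + 2 / ‖(H 0)‖ := by linarith
      set K := ‖c‖ + 2 / ‖(H 0)‖ with hK
      obtain ⟨Q, hQ⟩ := (isCompact_closedBall (0:ℂ) K).exists_bound_of_continuousOn
        (hFdiff.continuous.continuousOn)
      set w₀ : ℂ := ((max (3*R) t'⁻¹ + max Q 0 + 1 : ℝ) : ℂ) with hw₀
      have hmaxpos : 0 < max (3*R) t'⁻¹ :=
        lt_of_lt_of_le (by positivity : (0:ℝ) < 3*R) (le_max_left _ _)
      have hQ0 : 0 ≤ max Q 0 := le_max_right _ _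
      have habsw₀ : ‖w₀‖ = max (3*R) t'⁻¹ + max Q 0 + 1 := by
        rw [hw₀, Complex.norm_real, Real.norm_eq_abs, abs_of_pos (by linarith)]
      have hbig : max (3*R) t'⁻¹ < ‖w₀‖ := by rw [habsw₀]; linarith
      have hRw₀ : R ≤ ‖w₀‖ := by
        have h1 : 3*R ≤ max (3*R) t'⁻¹ := le_max_left _ _
        rw [habsw₀]
        linarith
      have hgw₀ : g w₀ ∈ closedBall (0:ℂ) K := by
        rw [mem_closedBall, Complex.dist_eq, sub_zero]
        exact hgbd w₀ hbig
      have hFg : F (g w₀) = w₀ := hginv' w₀ hRw₀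
      have hQb := hQ (g w₀) hgw₀
      rw [hFg, habsw₀] at hQb
      have : Q ≤ max Q 0 := le_max_left _ _
      linarith


lemma left_dir (lam : ℂ) (hlam : lam ≠ 0) (f : ℂ → ℂ)
    (hf : f = fun w => lam * Complex.exp w)
    (J : Set ℂ) (hJinv : f '' J ⊆ J) {ε : ℝ} (hε : 0 < ε)
    (hsep : ∀ n : ℕ, ∀ w ∈ J, ε ≤ chordalDist (f^[n] 0) w)
    (z : ℂ) (hz : z ∈ J)
    (hnt : ¬ Tendsto (fun n => ‖(f^[n] z)‖) atTop atTop) :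
    IsRadialPoint f z := by
  have horbJ : ∀ n : ℕ, f^[n] z ∈ J := by
    intro n
    induction n with
    | zero => simpa using hz
    | succ n ih =>
      rw [Function.iterate_succ_apply']
      exact hJinv ⟨f^[n] z, ih, rfl⟩
  rw [tendsto_atTop_atTop] at hnt
  push_neg at hnt
  obtain ⟨M₀, hM₀⟩ := hnt
  set M : ℝ := max M₀ 0 with hMdef
  have hM : ∀ N : ℕ, ∃ n, N ≤ n ∧ ‖(f^[n] z)‖ ≤ M := by
    intro N
    obtain ⟨n, hn1, hn2⟩ := hM₀ N
    exact ⟨n, hn1, le_trans hn2.le (le_max_left _ _)⟩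
  have hM0 : 0 ≤ M := le_max_right _ _
  set r : ℝ := ε / 2 with hrdef
  have hr : 0 < r := by rw [hrdef]; linarith
  set s : ℝ := Real.sqrt (1 + M ^ 2) with hsdef
  have hs1 : 1 ≤ s := one_le_sqrt_one_add_sq M
  have hs0 : 0 < s := lt_of_lt_of_le one_pos hs1
  set δ : ℝ := min (1 / s) (r / (2 * (1 + M) * s)) with hδdef
  have hδ0 : 0 < δ := by
    apply lt_min
    · positivity
    · positivity
  refine ⟨δ, hδ0, fun N => ?_⟩
  obtain ⟨n, hnN, hnM⟩ := hM N
  set a := f^[n] z with hadef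
  have horb : ∀ j : ℕ, j ≤ n → f^[j] 0 ∉ Metric.ball a r := by
    intro j _ hmem
    have hd : ‖(f^[j] 0 - a)‖ < r := by
      rw [mem_ball, Complex.dist_eq] at hmem
      exact hmem
    have hcd : chordalDist (f^[j] 0) a < ε := by
      have := chordalDist_le_two_mul (f^[j] 0) a
      rw [hrdef] at hd
      linarith
    exact absurd (hsep j a (horbJ n)) (not_le.2 hcd)
  obtain ⟨φ, hφd, hφa, hφinv⟩ :=
    branch_aux lam hlam f hf z n hr horb n le_rfl
  set ρ : ℝ := r / 2 + r / 2 ^ (n + 1) with hρdef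
  have hhalf : r / 2 < ρ := by
    rw [hρdef]
    have : 0 < r / 2 ^ (n + 1) := by positivity
    linarith
  have hsub : {w | chordalDist a w < δ} ⊆ Metric.ball a ρ := by
    intro w hw
    have hw' : chordalDist a w < δ := hw
    have hδs : δ * s ≤ 1 := by
      have h1 : δ ≤ 1 / s := min_le_left _ _
      calc δ * s ≤ (1 / s) * s := mul_le_mul_of_nonneg_right h1 hs0.le
        _ = 1 := by field_simp
    have habs := abs_sub_lt_of_chordal (le_trans le_rfl hnM) hδs hw'
    have hδ2 : δ ≤ r / (2 * (1 + M) * s) := min_le_right _ _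
    have hbound : δ * s * (1 + M) ≤ r / 2 := by
      have h2 : δ * s * (1 + M) ≤ (r / (2 * (1 + M) * s)) * s * (1 + M) := by
        apply mul_le_mul_of_nonneg_right _ (by linarith)
        exact mul_le_mul_of_nonneg_right hδ2 hs0.le
      have h3 : (r / (2 * (1 + M) * s)) * s * (1 + M) = r / 2 := by
        field_simp
      linarith
    rw [mem_ball, Complex.dist_eq]
    have : ‖(w - a)‖ = ‖(a - w)‖ := norm_sub_rev w a
    rw [this]
    calc ‖(a - w)‖ < δ * s * (1 + M) := habs
      _ ≤ r / 2 := hbound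
      _ < ρ := hhalf
  refine ⟨n, hnN, φ, ?_, ?_, ?_⟩
  · intro x hx
    exact (hφd.analyticOnNhd isOpen_ball) x (hsub hx)
  · rw [hφa]; simp
  · intro w hw
    exact hφinv w (hsub hw)

end RadialAux

/-- Let `f(z) = λ·e^z` (`λ ≠ 0`) be a hyperbolic exponential function (it has an attracting
periodic cycle), whose Julia set `J` stays at positive (spherical) distance from the
forward orbit of `0`.  Then a point `z ∈ J` is radial if and only if the sequence
`(fⁿ(z))ₙ` does not converge to `∞`. -/
theorem stmt18 (lam : ℂ) (hlam : lam ≠ 0) (f : ℂ → ℂ)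
    (hf : f = fun w => lam * Complex.exp w)
    -- hyperbolicity: an attracting periodic cycle
    (hhyp : ∃ (p : ℂ) (k : ℕ), 0 < k ∧ f^[k] p = p ∧ ‖deriv (f^[k]) p‖ < 1)
    (J : Set ℂ) (hJinv : f '' J ⊆ J)
    -- the forward orbit of 0 stays at positive distance from the Julia set J
    (hsep : ∃ ε > (0 : ℝ), ∀ n : ℕ, ∀ w ∈ J, ε ≤ chordalDist (f^[n] 0) w)
    (z : ℂ) (hz : z ∈ J) :
    IsRadialPoint f z ↔ ¬ Tendsto (fun n => ‖f^[n] z‖) atTop atTop := by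
  obtain ⟨ε, hε, hsepε⟩ := hsep
  constructor
  · intro hrad hten
    exact right_dir lam hlam f hf z hten hrad
  · intro hnt
    exact left_dir lam hlam f hf J hJinv hε hsepε z hz hnt
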